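/- If the Continuum Hypothesis holds, then for every function f : ℝ × ℝ → ℝ there exist functions g⁰ₙ, g¹ₙ : ℝ → ℝ (for n < ω) such that for all x, y ∈ ℝ the series Σₙ g⁰ₙ(x)·g¹ₙ(y) converges to f(x,y). -/

import Mathlib

open Set Filter Function

namespace DaviesCH


/-- A series `∑ aₙ bₙ` with all but finitely many terms zero, summing to `r`. -/
def ESum (a b : ℕ → ℝ) (r : ℝ) : Prop :=
  ∃ s : Finset ℕ, (∀ n ∉ s, a n * b n = 0) ∧ ∑ n ∈ s, a n * b n = r

theorem ESum.comm {a b : ℕ → ℝ} {r : ℝ} (h : ESum a b r) : ESum b a r := by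
  obtain ⟨s, h0, hs⟩ := h
  exact ⟨s, fun n hn => by rw [mul_comm]; exact h0 n hn,
    by rw [← hs]; exact Finset.sum_congr rfl fun n _ => mul_comm _ _⟩

theorem ESum.tendsto {a b : ℕ → ℝ} {r : ℝ} (h : ESum a b r) :
    Tendsto (fun N => ∑ n ∈ Finset.range N, a n * b n) atTop (nhds r) := by
  obtain ⟨s, h0, hs⟩ := h
  apply tendsto_atTop_of_eventually_const (i₀ := (s.sup id) + 1)
  intro N hN
  rw [← hs]
  apply (Finset.sum_subset _ fun n _ hn => h0 n hn).symm
  intro n hn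
  simp only [Finset.mem_range]
  exact lt_of_le_of_lt (Finset.le_sup (f := id) hn) (lt_of_lt_of_le (Nat.lt_succ_self _) hN)

open Classical in
noncomputable def pick (S : Set ℕ) : ℕ := if h : S.Nonempty then h.choose else 0

theorem pick_mem {S : Set ℕ} (h : S.Nonempty) : pick S ∈ S := by
  classical
  rw [pick]
  rw [dif_pos h]
  exact h.choose_spec

/-- An injective sequence with `z i ∈ P i`, for infinite pools `P i`. -/
theorem exists_nat_seq (P : ℕ → Set ℕ) (hP : ∀ i, (P i).Infinite) :
    ∃ z : ℕ → ℕ, Injective z ∧ ∀ i, z i ∈ P i := by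
  let stepF : ℕ → Finset ℕ → Finset ℕ := fun i Ti => insert (pick (P i \ (Ti : Set ℕ))) Ti
  let T : ℕ → Finset ℕ := fun i => Nat.rec (motive := fun _ => Finset ℕ) ∅ stepF i
  have hTsucc : ∀ i, T (i + 1) = stepF i (T i) := fun i => rfl
  let z : ℕ → ℕ := fun i => pick (P i \ ((T i : Finset ℕ) : Set ℕ))
  have hz : ∀ i, z i ∈ P i \ T i := by
    intro i
    exact pick_mem (((hP i).diff (T i).finite_toSet).nonempty)
  have hmono : ∀ i j, i ≤ j → (T i : Set ℕ) ⊆ T j := by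
    intro i j hij
    induction j with
    | zero => simp_all
    | succ j ih =>
      rcases Nat.lt_or_ge i (j+1) with h | h
      · refine subset_trans (ih (Nat.lt_succ_iff.mp h)) ?_
        rw [hTsucc]
        intro x hx
        simp only [stepF, Finset.coe_insert, Set.mem_insert_iff]
        exact Or.inr hx
      · have : i = j + 1 := le_antisymm hij h
        subst this; exact subset_rfl
  have hzT : ∀ i j, i < j → z i ∈ (T j : Set ℕ) := by
    intro i j hij
    apply hmono (i+1) j hij
    rw [hTsucc]
    simp only [stepF, Finset.coe_insert, Set.mem_insert_iff]
    tauto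
  refine ⟨z, ?_, fun i => (hz i).1⟩
  intro i j hij
  by_contra hne
  rcases Nat.lt_or_ge i j with h | h
  · exact (hz j).2 (by rw [← hij]; exact_mod_cast hzT i j h)
  · exact (hz i).2 (by rw [hij]; exact_mod_cast hzT j i (lt_of_le_of_ne h (Ne.symm hne)))

/-- intersecting with a finite union -/
theorem inter_iUnion_lt_finite {B : Set ℕ} {G : ℕ → Set ℕ} (N : ℕ)
    (hG : ∀ m, m < N → (B ∩ G m).Finite) : (B ∩ ⋃ m < N, G m).Finite := by
  have : B ∩ ⋃ m < N, G m = ⋃ m ∈ Finset.range N, (B ∩ G m) := by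
    ext x
    simp only [mem_inter_iff, mem_iUnion, Finset.mem_range, exists_prop]
    tauto
  rw [this]
  exact (Finset.range N).finite_toSet.biUnion (fun m hm => hG m (Finset.mem_range.mp hm))

theorem notmem_iUnion_lt {G : ℕ → Set ℕ} {n N : ℕ} (h : n ∉ ⋃ m < N, G m) :
    ∀ m, m < N → n ∉ G m := by
  intro m hm hmem
  exact h (mem_iUnion.mpr ⟨m, mem_iUnion.mpr ⟨hm, hmem⟩⟩)

theorem mem_iUnion_lt {G : ℕ → Set ℕ} {n N m : ℕ} (hm : m < N) (h : n ∈ G m) :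
    n ∈ ⋃ m < N, G m := mem_iUnion.mpr ⟨m, mem_iUnion.mpr ⟨hm, h⟩⟩

/-- The a.d. + complement-condition extension lemma. -/
theorem ext_lemma (F : ℕ → Set ℕ) (hV : ∀ N : ℕ, ((⋃ m < N, F m)ᶜ : Set ℕ).Infinite) :
    ∃ E : Set ℕ, E.Infinite ∧ (∀ m, (E ∩ F m).Finite) ∧
      (∀ N, (((⋃ m < N, F m) ∪ E)ᶜ : Set ℕ).Infinite) := by
  obtain ⟨z, hzinj, hz⟩ := exists_nat_seq (fun t => (⋃ m < t/2 + 1, F m)ᶜ) (fun t => hV _)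
  set x : ℕ → ℕ := fun i => z (2*i) with hx
  set y : ℕ → ℕ := fun i => z (2*i+1) with hy
  have hxinj : Injective x := fun i j h => by have := hzinj h; omega
  have hxF : ∀ i m, m ≤ i → x i ∉ F m := by
    intro i m hm
    have h2 : (2*i)/2 = i := by omega
    have := hz (2*i); rw [h2] at this
    exact notmem_iUnion_lt this m (by omega)
  have hyF : ∀ i m, m ≤ i → y i ∉ F m := by
    intro i m hm
    have h2 : (2*i+1)/2 = i := by omega
    have := hz (2*i+1); rw [h2] at this
    exact notmem_iUnion_lt this m (by omega)
  refine ⟨Set.range x, infinite_range_of_injective hxinj, ?_, ?_⟩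
  · intro m
    have : Set.range x ∩ F m ⊆ x '' (Iio m) := by
      rintro n ⟨⟨i, rfl⟩, hnF⟩
      refine ⟨i, ?_, rfl⟩
      by_contra h
      exact hxF i m (by simpa using h) hnF
    exact ((finite_Iio m).image x).subset this
  · intro N
    apply infinite_of_injective_forall_mem (f := fun t : ℕ => y (N + t))
      (fun a b h => by have := hzinj h; omega)
    intro t
    simp only [mem_compl_iff, mem_union, not_or]
    constructor
    · intro hmem
      simp only [mem_iUnion] at hmem
      obtain ⟨m, hm, hmem⟩ := hmem
      exact hyF (N+t) m (by omega) hmem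
    · rintro ⟨i, hi⟩
      have := hzinj hi; omega


theorem core_lemma (A : ℕ → Set ℕ) (u : ℕ → ℕ → ℝ) (c : ℕ → ℝ) (ok : ℕ → Prop)
    (F : ℕ → Set ℕ) (E : Set ℕ)
    (hu : ∀ k, ok k → ∀ n ∈ A k, u k n ≠ 0)
    (hA : ∀ k, ok k → (A k).Infinite)
    (hAA : ∀ k k', k ≠ k' → (A k ∩ (A k' ∪ support (u k'))).Finite)
    (hAF : ∀ k m, (A k ∩ F m).Finite)
    (hAE : ∀ k, (A k ∩ E).Finite)
    (hEu : ∀ k, (E ∩ support (u k)).Finite)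
    (hV : ∀ N, (((⋃ m < N, F m) ∪ (⋃ k < N, (A k ∪ support (u k))) ∪ E)ᶜ : Set ℕ).Infinite) :
    ∃ g : ℕ → ℝ, (∀ n ∈ E, g n = 1) ∧ (∀ k, ok k → ESum g (u k) (c k)) ∧
      (∃ Ps : Set ℕ, support g ⊆ E ∪ Ps ∧ Ps ∩ E = ∅ ∧
        (∀ m, (Ps ∩ F m).Finite) ∧ (∀ k, (Ps ∩ (A k ∪ support (u k))).Finite)) ∧
      (∀ N, (((⋃ m < N, F m) ∪ (⋃ k < N, (A k ∪ support (u k))) ∪ E ∪ support g)ᶜ :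
        Set ℕ).Infinite) := by
  classical
  set pF : ℕ → Set ℕ := fun k => A k ∪ support (u k) with hpF
  set Obst : ℕ → Set ℕ := fun i => (⋃ m < i+1, F m) ∪ (⋃ k < i+1, pF k) ∪ E with hObst
  set jAv : ℕ → Set ℕ := fun i => (⋃ m < i+1, F m) ∪ (⋃ k < i, pF k) ∪ E with hjAv
  have hObstC : ∀ i, ((Obst i)ᶜ : Set ℕ).Infinite := fun i => by
    have := hV (i+1); exact this
  set Pz : ℕ → Set ℕ := fun t =>
    if (t % 2 = 0 ∧ ok (t/2)) then A (t/2) \ jAv (t/2) else (Obst (t/2))ᶜ with hPzdef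
  have hjpool : ∀ i, ok i → (A i \ jAv i).Infinite := by
    intro i hok
    have hfin : (A i ∩ jAv i).Finite := by
      simp only [hjAv]
      have h1 : (A i ∩ ((⋃ m < i+1, F m))).Finite :=
        inter_iUnion_lt_finite _ (fun m _ => hAF i m)
      have h2 : (A i ∩ (⋃ k < i, pF k)).Finite :=
        inter_iUnion_lt_finite _ (fun k hk => hAA i k (by omega))
      have h3 := hAE i
      refine Set.Finite.subset ((h1.union h2).union h3) ?_
      rintro n ⟨hnA, hmem⟩
      rcases hmem with (h|h)|h
      exacts [Or.inl (Or.inl ⟨hnA,h⟩), Or.inl (Or.inr ⟨hnA,h⟩), Or.inr ⟨hnA,h⟩]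
    have : A i \ jAv i = A i \ (A i ∩ jAv i) := (Set.diff_self_inter).symm
    rw [this]
    exact (hA i hok).diff hfin
  have hPz : ∀ t, (Pz t).Infinite := by
    intro t
    simp only [hPzdef]
    by_cases h : (t % 2 = 0 ∧ ok (t/2))
    · rw [if_pos h]; exact hjpool _ h.2
    · rw [if_neg h]; exact hObstC _
  obtain ⟨z, hzinj, hzmem⟩ := exists_nat_seq Pz hPz
  set j : ℕ → ℕ := fun i => z (2*i) with hjdef
  set wit : ℕ → ℕ := fun i => z (2*i+1) with hwitdef
  have hjinj : Injective j := fun a b h => by have := hzinj h; omega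
  have hjwit : ∀ i i', j i ≠ wit i' := by
    intro i i' h
    have := hzinj h; omega
  have hjmem : ∀ i, ok i → j i ∈ A i \ jAv i := by
    intro i h
    have hm := hzmem (2*i)
    simp only [hPzdef] at hm
    rw [show 2*i % 2 = 0 from by omega, show 2*i/2 = i from by omega] at hm
    rwa [if_pos ⟨rfl, h⟩] at hm
  have hjmem' : ∀ i, ¬ ok i → j i ∈ (Obst i)ᶜ := by
    intro i h
    have hm := hzmem (2*i)
    simp only [hPzdef] at hm
    rw [show 2*i % 2 = 0 from by omega, show 2*i/2 = i from by omega] at hm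
    rwa [if_neg (by tauto)] at hm
  have hwmem : ∀ i, wit i ∈ (Obst i)ᶜ := by
    intro i
    have hm := hzmem (2*i+1)
    simp only [hPzdef] at hm
    rw [show (2*i+1) % 2 = 1 from by omega, show (2*i+1)/2 = i from by omega] at hm
    rwa [if_neg (by omega)] at hm
  -- basic avoidance facts
  have hjE : ∀ i, j i ∉ E := by
    intro i
    by_cases h : ok i
    · have := (hjmem i h).2
      intro hE
      exact this (Or.inr hE)
    · have := hjmem' i h
      intro hE
      exact this (Or.inr hE)
  have hjpF : ∀ k i, k < i → j i ∉ pF k := by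
    intro k i hki
    by_cases h : ok i
    · have h2 := (hjmem i h).2
      intro hmem
      exact h2 (Or.inl (Or.inr (mem_iUnion_lt hki hmem)))
    · have h2 := hjmem' i h
      intro hmem
      exact h2 (Or.inl (Or.inr (mem_iUnion_lt (show k < i+1 by omega) hmem)))
  have key1 : ∀ k i, k < i → u k (j i) = 0 := by
    intro k i hki
    by_contra h
    exact hjpF k i hki (Or.inr h)
  have keyF : ∀ m i, m ≤ i → j i ∉ F m := by
    intro m i hmi
    by_cases h : ok i
    · have h2 := (hjmem i h).2
      intro hmem
      exact h2 (Or.inl (Or.inl (mem_iUnion_lt (show m < i+1 by omega) hmem)))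
    · have h2 := hjmem' i h
      intro hmem
      exact h2 (Or.inl (Or.inl (mem_iUnion_lt (show m < i+1 by omega) hmem)))
  -- values
  set eS : ℕ → ℝ := fun k => ∑ n ∈ (hEu k).toFinset, u k n with heS
  set vstep : ℕ → (ℕ → ℝ) → (ℕ → ℝ) := fun i prev => Function.update prev i
      (if _ : ok i then
        (c i - eS i - ∑ i' ∈ Finset.range i, prev i' * u i (j i')) / (u i (j i)) else 0)
    with hvstep
  set vf : ℕ → (ℕ → ℝ) := fun d => Nat.rec (motive := fun _ => ℕ → ℝ) (fun _ => 0) vstep d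
    with hvf
  have hvf_succ : ∀ d, vf (d+1) = vstep d (vf d) := fun d => rfl
  set val : ℕ → ℝ := fun i => vf (i+1) i with hvaldef
  have hstable : ∀ d i, i < d → vf d i = val i := by
    intro d
    induction d with
    | zero => omega
    | succ d ih =>
      intro i hi
      rcases Nat.lt_or_ge i d with h | h
      · rw [hvf_succ]
        simp only [hvstep]
        rw [Function.update_of_ne (by omega)]
        exact ih i h
      · have : i = d := by omega
        subst this; rfl
  have hval_ok : ∀ i, ok i → val i =
      (c i - eS i - ∑ i' ∈ Finset.range i, val i' * u i (j i')) / (u i (j i)) := by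
    intro i h
    show vf (i+1) i = _
    rw [hvf_succ]
    simp only [hvstep]
    rw [Function.update_self, dif_pos h]
    congr 2
    apply Finset.sum_congr rfl
    intro i' hi'
    rw [hstable i i' (Finset.mem_range.mp hi')]
  have hval_notok : ∀ i, ¬ ok i → val i = 0 := by
    intro i h
    show vf (i+1) i = _
    rw [hvf_succ]
    simp only [hvstep]
    rw [Function.update_self, dif_neg h]
  -- the function g
  set g : ℕ → ℝ := fun n =>
    if n ∈ E then 1 else if h : ∃ i, ok i ∧ j i = n then val h.choose else 0 with hgdef
  have hgE : ∀ n ∈ E, g n = 1 := by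
    intro n hn
    simp only [hgdef]
    rw [if_pos hn]
  have hgval : ∀ i, g (j i) = val i := by
    intro i
    simp only [hgdef]
    rw [if_neg (hjE i)]
    by_cases h : ok i
    · have hex : ∃ i', ok i' ∧ j i' = j i := ⟨i, h, rfl⟩
      rw [dif_pos hex]
      have hsp := hex.choose_spec
      rw [hjinj hsp.2]
    · have hex : ¬ ∃ i', ok i' ∧ j i' = j i := by
        rintro ⟨i', hok', heq⟩
        exact h (hjinj heq ▸ hok')
      rw [dif_neg hex, hval_notok i h]
  set Ps : Set ℕ := {n | ∃ i, ok i ∧ j i = n} with hPs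
  have hsupp : support g ⊆ E ∪ Ps := by
    intro n hn
    by_cases hE : n ∈ E
    · exact Or.inl hE
    · by_cases hex : ∃ i, ok i ∧ j i = n
      · exact Or.inr hex
      · exfalso
        apply hn
        simp only [hgdef]
        rw [if_neg hE, dif_neg hex]
  refine ⟨g, hgE, ?_, ⟨Ps, hsupp, ?_, ?_, ?_⟩, ?_⟩
  · -- equations
    intro k hk
    have hjnotE : ∀ i, j i ∉ E := hjE
    have hdisj : Disjoint (hEu k).toFinset ((Finset.range (k+1)).image j) := by
      rw [Finset.disjoint_left]
      intro n hn hn2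
      obtain ⟨i, _, rfl⟩ := Finset.mem_image.mp hn2
      exact hjE i (((hEu k).mem_toFinset.mp hn).1)
    refine ⟨(hEu k).toFinset ∪ (Finset.range (k+1)).image j, ?_, ?_⟩
    · intro n hn
      rw [Finset.mem_union] at hn
      push_neg at hn
      by_cases hg : g n = 0
      · rw [hg, zero_mul]
      · rcases hsupp (mem_support.mpr hg) with hE | hP
        · have hns : n ∉ support (u k) := by
            intro hs
            exact hn.1 ((hEu k).mem_toFinset.mpr ⟨hE, hs⟩)
          rw [notMem_support.mp hns, mul_zero]
        · obtain ⟨i, hoki, rfl⟩ := hP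
          have hik : k < i := by
            by_contra hcon
            exact hn.2 (Finset.mem_image.mpr ⟨i, Finset.mem_range.mpr (by omega), rfl⟩)
          rw [key1 k i hik, mul_zero]
    · rw [Finset.sum_union hdisj]
      have h1 : ∑ n ∈ (hEu k).toFinset, g n * u k n = eS k := by
        apply Finset.sum_congr rfl
        intro n hn
        rw [hgE n (((hEu k).mem_toFinset.mp hn).1), one_mul]
      have h2 : ∑ n ∈ (Finset.range (k+1)).image j, g n * u k n
          = ∑ i ∈ Finset.range (k+1), val i * u k (j i) := by
        rw [Finset.sum_image (fun a _ b _ h => hjinj h)]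
        apply Finset.sum_congr rfl
        intro i _
        rw [hgval i]
      rw [h1, h2, Finset.sum_range_succ]
      have hu0 : u k (j k) ≠ 0 := hu k hk (j k) (hjmem k hk).1
      rw [hval_ok k hk, div_mul_cancel₀ _ hu0]
      ring
  · -- Ps ∩ E = ∅
    ext n
    simp only [mem_inter_iff, mem_empty_iff_false, iff_false, not_and]
    rintro ⟨i, _, rfl⟩
    exact hjE i
  · -- Ps ∩ F m finite
    intro m
    have : Ps ∩ F m ⊆ j '' (Iio m) := by
      rintro n ⟨⟨i, hoki, rfl⟩, hF⟩
      refine ⟨i, ?_, rfl⟩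
      simp only [mem_Iio]
      by_contra hcon
      push_neg at hcon
      exact keyF m i hcon hF
    exact ((finite_Iio m).image j).subset this
  · -- Ps ∩ pF k finite
    intro k
    have : Ps ∩ pF k ⊆ j '' (Iic k) := by
      rintro n ⟨⟨i, hoki, rfl⟩, hpFk⟩
      refine ⟨i, ?_, rfl⟩
      simp only [mem_Iic]
      by_contra hcon
      push_neg at hcon
      exact hjpF k i hcon hpFk
    exact ((finite_Iic k).image j).subset this
  · -- V' preservation
    intro N
    apply infinite_of_injective_forall_mem (f := fun t : ℕ => wit (N + t))
      (fun a b h => by have := hzinj h; omega)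
    intro t
    have hO := hwmem (N + t)
    simp only [hObst, mem_compl_iff, mem_union, not_or] at hO
    obtain ⟨⟨hOF, hOpF⟩, hOE⟩ := hO
    simp only [mem_compl_iff, mem_union, not_or]
    refine ⟨⟨⟨?_, ?_⟩, hOE⟩, ?_⟩
    · intro hmem
      simp only [mem_iUnion] at hmem
      obtain ⟨m, hm, hmem⟩ := hmem
      exact hOF (mem_iUnion_lt (by omega) hmem)
    · intro hmem
      simp only [mem_iUnion] at hmem
      obtain ⟨k, hkN, hmem⟩ := hmem
      exact hOpF (mem_iUnion_lt (by omega) hmem)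
    · intro hmem
      rcases hsupp hmem with hE | hP
      · exact hOE hE
      · obtain ⟨i, _, heq⟩ := hP
        exact hjwit i (N+t) heq

noncomputable section

abbrev W : Type := (Cardinal.aleph 1).ord.ToType

theorem countable_Iio (w : W) : (Set.Iio w).Countable := by
  rw [Cardinal.countable_iff_lt_aleph_one]
  exact Cardinal.mk_Iio_toType_ord_lt w

structure SD where
  g : ℕ → ℝ
  h : ℕ → ℝ
  Eg : Set ℕ
  Eh : Set ℕ

instance : Inhabited SD := ⟨⟨0, 0, ∅, ∅⟩⟩

def FP (D : W → SD) (v : W) : Set ℕ := support (D v).g ∪ support (D v).h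

variable (f : ℝ × ℝ → ℝ) (x : W → ℝ)

structure Good (D : W → SD) (w : W) (d : SD) : Prop where
  hEgInf : d.Eg.Infinite
  hEhInf : d.Eh.Infinite
  hg1 : ∀ n ∈ d.Eg, d.g n = 1
  hh1 : ∀ n ∈ d.Eh, d.h n = 1
  hgh : (support d.g ∩ support d.h).Finite
  hADg : ∀ v, v < w → (support d.g ∩ FP D v).Finite
  hADh : ∀ v, v < w → (support d.h ∩ FP D v).Finite
  hV : ∀ S : Set W, S.Finite → (∀ v ∈ S, v < w) →
    (((⋃ v ∈ S, FP D v) ∪ (support d.g ∪ support d.h))ᶜ : Set ℕ).Infinite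
  hEQ1 : ∀ v, v < w → ESum d.g (D v).h (f (x w, x v))
  hEQ2 : ∀ v, v < w → ESum (D v).g d.h (f (x v, x w))
  hEQ0 : ESum d.g d.h (f (x w, x w))

theorem stage (w : W) (D : W → SD) (hprev : ∀ v, v < w → Good f x D v (D v)) :
    ∃ d, Good f x D w d := by
  classical
  have hcnt : Countable (Set.Iio w) := (countable_Iio w).to_subtype
  obtain ⟨fI, hfI⟩ := Countable.exists_injective_nat (Set.Iio w)
  -- richness inclusions for earlier stages
  have hEgsub : ∀ v : Set.Iio w, (D v.1).Eg ⊆ support (D v.1).g := by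
    intro v n hn
    have h1 := (hprev v.1 v.2).hg1 n hn
    rw [mem_support, h1]; exact one_ne_zero
  have hEhsub : ∀ v : Set.Iio w, (D v.1).Eh ⊆ support (D v.1).h := by
    intro v n hn
    have h1 := (hprev v.1 v.2).hh1 n hn
    rw [mem_support, h1]; exact one_ne_zero
  -- pairwise a.d. of past footprints
  have hFPFP : ∀ v v' : W, v' < v → v < w → (FP D v ∩ FP D v').Finite := by
    intro v v' hvv hvw
    have h1 := (hprev v hvw).hADg v' hvv
    have h2 := (hprev v hvw).hADh v' hvv
    refine (h1.union h2).subset ?_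
    rintro n ⟨h | h, h'⟩
    exacts [Or.inl ⟨h, h'⟩, Or.inr ⟨h, h'⟩]
  have hFPne : ∀ (v v' : W), v < w → v' < w → v ≠ v' → (FP D v ∩ FP D v').Finite := by
    intro v v' hv hv' hne
    rcases lt_or_gt_of_ne hne with h | h
    · rw [inter_comm]; exact hFPFP v' v h hv'
    · exact hFPFP v v' h hv
  -- master V' over finite sets of stages
  have hVW : ∀ S : Set W, S.Finite → (∀ v ∈ S, v < w) →
      ((⋃ v ∈ S, FP D v)ᶜ : Set ℕ).Infinite := by
    intro S hS hSw
    rcases S.eq_empty_or_nonempty with rfl | hne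
    · simp only [mem_empty_iff_false, iUnion_of_empty, iUnion_empty, compl_empty]
      exact infinite_univ
    · obtain ⟨v₀, hv₀S, hmax⟩ := Set.Finite.exists_maximalFor id S hS hne
      have hv₀w := hSw v₀ hv₀S
      have hothers : ∀ v ∈ S \ {v₀}, v < v₀ := by
        intro v hv
        rcases lt_trichotomy v v₀ with h | h | h
        · exact h
        · exact absurd h hv.2
        · exact absurd (hmax hv.1 (le_of_lt h)) (not_le_of_gt h)
      have hVv := (hprev v₀ hv₀w).hV (S \ {v₀}) hS.diff
        (fun v hv => hothers v hv)
      refine hVv.mono (compl_subset_compl.mpr ?_)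
      intro n hn
      simp only [mem_iUnion, exists_prop] at hn
      obtain ⟨v, hvS, hmem⟩ := hn
      by_cases hveq : v = v₀
      · subst hveq
        exact Or.inr hmem
      · exact Or.inl (mem_iUnion₂.mpr ⟨v, ⟨hvS, hveq⟩, hmem⟩)
  -- enumeration of past footprints
  set Enum : ℕ → Set ℕ := fun m =>
    if h : ∃ v : Set.Iio w, fI v = m then FP D h.choose.1 else ∅ with hEnumDef
  have hch : ∀ (v : Set.Iio w) (h : ∃ v' : Set.Iio w, fI v' = fI v), h.choose = v :=
    fun v h => hfI h.choose_spec
  have hEnumAt : ∀ v : Set.Iio w, Enum (fI v) = FP D v.1 := by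
    intro v
    have hex : ∃ v' : Set.Iio w, fI v' = fI v := ⟨v, rfl⟩
    simp only [hEnumDef]
    rw [dif_pos hex, hch v hex]
  have hEnumV : ∀ N, ((⋃ m < N, Enum m)ᶜ : Set ℕ).Infinite := by
    intro N
    have hSfin : ((fun v : Set.Iio w => v.1) '' (fI ⁻¹' (Iio N))).Finite :=
      (((finite_Iio N).preimage hfI.injOn)).image _
    have hVS := hVW _ hSfin (by rintro v ⟨v', _, rfl⟩; exact v'.2)
    refine hVS.mono (compl_subset_compl.mpr ?_)
    intro n hn
    simp only [mem_iUnion, exists_prop] at hn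
    obtain ⟨m, hmN, hmem⟩ := hn
    by_cases h : ∃ v : Set.Iio w, fI v = m
    · refine mem_iUnion₂.mpr ⟨h.choose.1, ?_, ?_⟩
      · exact ⟨h.choose, by simp only [mem_preimage, mem_Iio, h.choose_spec]; exact hmN, rfl⟩
      · rw [hEnumDef] at hmem
        simp only at hmem
        rwa [dif_pos h] at hmem
    · rw [hEnumDef] at hmem
      simp only at hmem
      rw [dif_neg h] at hmem
      exact absurd hmem (notMem_empty n)
  -- first extension set Eg
  obtain ⟨Eg, hEg1, hEg2, hEg3⟩ := ext_lemma Enum hEnumV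
  -- second extension set Eh
  set EF : ℕ → Set ℕ := fun m => Nat.casesOn m Eg (fun m' => Enum m') with hEFdef
  have hEFV : ∀ N, ((⋃ m < N, EF m)ᶜ : Set ℕ).Infinite := by
    intro N
    refine (hEg3 N).mono (compl_subset_compl.mpr ?_)
    intro n hn
    simp only [mem_iUnion, exists_prop] at hn
    obtain ⟨m, hmN, hmem⟩ := hn
    cases m with
    | zero => exact Or.inr hmem
    | succ m' =>
      refine Or.inl (mem_iUnion₂.mpr ⟨m', ?_, hmem⟩)
      omega
  obtain ⟨Eh, hEh1, hEh2, hEh3⟩ := ext_lemma EF hEFV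
  have hEF0 : EF 0 = Eg := rfl
  have hEFsucc : ∀ m, EF (m + 1) = Enum m := fun _ => rfl
  have hEhFP : ∀ v : Set.Iio w, (Eh ∩ FP D v.1).Finite := by
    intro v
    have := hEh2 (fI v + 1)
    rwa [hEFsucc, hEnumAt] at this
  have hEgFP : ∀ v : Set.Iio w, (Eg ∩ FP D v.1).Finite := by
    intro v
    have := hEg2 (fI v)
    rwa [hEnumAt] at this
  have hEgEh : (Eh ∩ Eg).Finite := hEh2 0
  have hsupp0 : support (0 : ℕ → ℝ) = ∅ := support_zero
  -- partners and obstacles for the g-side solver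
  set ok1 : ℕ → Prop := fun i => ∃ v : Set.Iio w, fI v = i with hok1
  set A1 : ℕ → Set ℕ := fun i => if h : ok1 i then (D h.choose.1).Eh else ∅ with hA1
  set u1 : ℕ → ℕ → ℝ := fun i => if h : ok1 i then (D h.choose.1).h else 0 with hu1
  set c1 : ℕ → ℝ := fun i => if h : ok1 i then f (x w, x h.choose.1) else 0 with hc1
  set F1 : ℕ → Set ℕ :=
    fun m => Nat.casesOn m Eh (fun m' => if h : ok1 m' then support (D h.choose.1).g else ∅)
    with hF1
  have hA1at : ∀ v : Set.Iio w, A1 (fI v) = (D v.1).Eh := by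
    intro v
    have hex : ok1 (fI v) := ⟨v, rfl⟩
    simp only [hA1]; rw [dif_pos hex, hch v hex]
  have hu1at : ∀ v : Set.Iio w, u1 (fI v) = (D v.1).h := by
    intro v
    have hex : ok1 (fI v) := ⟨v, rfl⟩
    simp only [hu1]; rw [dif_pos hex, hch v hex]
  have hc1at : ∀ v : Set.Iio w, c1 (fI v) = f (x w, x v.1) := by
    intro v
    have hex : ok1 (fI v) := ⟨v, rfl⟩
    simp only [hc1]; rw [dif_pos hex, hch v hex]
  have hF10 : F1 0 = Eh := rfl
  have hF1at : ∀ v : Set.Iio w, F1 (fI v + 1) = support (D v.1).g := by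
    intro v
    have hex : ok1 (fI v) := ⟨v, rfl⟩
    show (if h : ok1 (fI v) then support (D h.choose.1).g else ∅) = _
    rw [dif_pos hex, hch v hex]
  have hpF1sub : ∀ v : Set.Iio w, A1 (fI v) ∪ support (u1 (fI v)) ⊆ FP D v.1 := by
    intro v
    rw [hA1at v, hu1at v]
    rintro n (h | h)
    · exact Or.inr (hEhsub v h)
    · exact Or.inr h
  have hcg1 : ∀ k, ok1 k → ∀ n ∈ A1 k, u1 k n ≠ 0 := by
    intro k hk
    obtain ⟨v, rfl⟩ := hk
    rw [hA1at v, hu1at v]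
    intro n hn
    rw [(hprev v.1 v.2).hh1 n hn]
    exact one_ne_zero
  have hcg2 : ∀ k, ok1 k → (A1 k).Infinite := by
    intro k hk
    obtain ⟨v, rfl⟩ := hk
    rw [hA1at v]
    exact (hprev v.1 v.2).hEhInf
  have hA1empty : ∀ k, ¬ ok1 k → A1 k = ∅ := by
    intro k hk; simp only [hA1]; rw [dif_neg hk]
  have hu1zero : ∀ k, ¬ ok1 k → u1 k = 0 := by
    intro k hk; simp only [hu1]; rw [dif_neg hk]
  have hcg3 : ∀ k k', k ≠ k' → (A1 k ∩ (A1 k' ∪ support (u1 k'))).Finite := by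
    intro k k' hne
    by_cases h : ok1 k
    · obtain ⟨v, rfl⟩ := h
      by_cases h' : ok1 k'
      · obtain ⟨v', rfl⟩ := h'
        have hvne : v.1 ≠ v'.1 := by
          intro he
          exact hne (by rw [Subtype.ext he])
        rw [hA1at, hA1at, hu1at]
        refine (hFPne v.1 v'.1 v.2 v'.2 hvne).subset ?_
        rintro n ⟨h1, h2⟩
        refine ⟨Or.inr (hEhsub v h1), ?_⟩
        rcases h2 with h2 | h2
        exacts [Or.inr (hEhsub v' h2), Or.inr h2]
      · rw [hA1empty k' h', hu1zero k' h', hsupp0]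
        simp only [union_empty, inter_empty]
        exact finite_empty
    · rw [hA1empty k h]
      simp only [empty_inter]
      exact finite_empty
  have hcg4 : ∀ k m, (A1 k ∩ F1 m).Finite := by
    intro k m
    by_cases h : ok1 k
    · obtain ⟨v, rfl⟩ := h
      rw [hA1at]
      cases m with
      | zero =>
        rw [hF10]
        refine (hEhFP v).subset ?_
        rintro n ⟨h1, h2⟩
        exact ⟨h2, Or.inr (hEhsub v h1)⟩
      | succ m' =>
        by_cases h' : ok1 m'
        · obtain ⟨v', rfl⟩ := h'
          rw [hF1at v']
          by_cases hvv : v = v'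
          · subst hvv
            refine ((hprev v.1 v.2).hgh.subset ?_)
            rintro n ⟨h1, h2⟩
            exact ⟨h2, hEhsub v h1⟩
          · have hvne : v.1 ≠ v'.1 := fun he => hvv (Subtype.ext he)
            refine (hFPne v.1 v'.1 v.2 v'.2 hvne).subset ?_
            rintro n ⟨h1, h2⟩
            exact ⟨Or.inr (hEhsub v h1), Or.inl h2⟩
        · have : F1 (m' + 1) = ∅ := by
            show (if h : ok1 m' then support (D h.choose.1).g else ∅) = ∅
            rw [dif_neg h']
          rw [this]
          simp only [inter_empty]
          exact finite_empty
    · rw [hA1empty k h]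
      simp only [empty_inter]
      exact finite_empty
  have hcg5 : ∀ k, (A1 k ∩ Eg).Finite := by
    intro k
    by_cases h : ok1 k
    · obtain ⟨v, rfl⟩ := h
      rw [hA1at]
      refine (hEgFP v).subset ?_
      rintro n ⟨h1, h2⟩
      exact ⟨h2, Or.inr (hEhsub v h1)⟩
    · rw [hA1empty k h]
      simp only [empty_inter]
      exact finite_empty
  have hcg6 : ∀ k, (Eg ∩ support (u1 k)).Finite := by
    intro k
    by_cases h : ok1 k
    · obtain ⟨v, rfl⟩ := h
      rw [hu1at]
      refine (hEgFP v).subset ?_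
      rintro n ⟨h1, h2⟩
      exact ⟨h1, Or.inr h2⟩
    · rw [hu1zero k h, hsupp0]
      simp only [inter_empty]
      exact finite_empty
  have hcg7 : ∀ N, (((⋃ m < N, F1 m) ∪ (⋃ k < N, (A1 k ∪ support (u1 k))) ∪ Eg)ᶜ :
      Set ℕ).Infinite := by
    intro N
    refine (hEh3 (N+1)).mono (compl_subset_compl.mpr ?_)
    intro n hn
    rcases hn with (hn | hn) | hn
    · simp only [mem_iUnion, exists_prop] at hn
      obtain ⟨m, hmN, hmem⟩ := hn
      cases m with
      | zero => exact Or.inr hmem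
      | succ m' =>
        by_cases h' : ok1 m'
        · obtain ⟨v, rfl⟩ := h'
          rw [hF1at v] at hmem
          refine Or.inl (mem_iUnion₂.mpr ⟨fI v + 1, by omega, ?_⟩)
          rw [hEFsucc, hEnumAt]
          exact Or.inl hmem
        · have : F1 (m' + 1) = ∅ := by
            show (if h : ok1 m' then support (D h.choose.1).g else ∅) = ∅
            rw [dif_neg h']
          rw [this] at hmem
          exact absurd hmem (notMem_empty n)
    · simp only [mem_iUnion, exists_prop] at hn
      obtain ⟨k, hkN, hmem⟩ := hn
      by_cases h' : ok1 k
      · obtain ⟨v, rfl⟩ := h'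
        refine Or.inl (mem_iUnion₂.mpr ⟨fI v + 1, by omega, ?_⟩)
        rw [hEFsucc, hEnumAt]
        exact hpF1sub v hmem
      · rw [hA1empty k h', hu1zero k h', hsupp0] at hmem
        simp only [union_empty] at hmem
        exact absurd hmem (notMem_empty n)
    · exact Or.inl (mem_iUnion₂.mpr ⟨0, by omega, hn⟩)
  obtain ⟨gN, hgN1, hgN2, ⟨Ps1, hPs1sub, hPs1E, hPs1F, hPs1pF⟩, hgNV⟩ :=
    core_lemma A1 u1 c1 ok1 F1 Eg hcg1 hcg2 hcg3 hcg4 hcg5 hcg6 hcg7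
  -- facts about the new g
  have hgNEg : Eg ⊆ support gN := by
    intro n hn
    rw [mem_support, hgN1 n hn]
    exact one_ne_zero
  have hPs1hv : ∀ v : Set.Iio w, (Ps1 ∩ support (D v.1).h).Finite := by
    intro v
    refine (hPs1pF (fI v)).subset ?_
    rw [hA1at, hu1at]
    rintro n ⟨h1, h2⟩
    exact ⟨h1, Or.inr h2⟩
  have hPs1gv : ∀ v : Set.Iio w, (Ps1 ∩ support (D v.1).g).Finite := by
    intro v
    have := hPs1F (fI v + 1)
    rwa [hF1at] at this
  have hgNFP : ∀ v : Set.Iio w, (support gN ∩ FP D v.1).Finite := by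
    intro v
    refine (((hEgFP v).union (hPs1gv v)).union (hPs1hv v)).subset ?_
    rintro n ⟨h1, h2⟩
    rcases hPs1sub h1 with hE | hP
    · exact Or.inl (Or.inl ⟨hE, h2⟩)
    · rcases h2 with h2 | h2
      · exact Or.inl (Or.inr ⟨hP, h2⟩)
      · exact Or.inr ⟨hP, h2⟩
  have hgNEh : (support gN ∩ Eh).Finite := by
    have h1 : (Eg ∩ Eh).Finite := by rw [inter_comm]; exact hEgEh
    have h2 : (Ps1 ∩ Eh).Finite := hPs1F 0
    refine (h1.union h2).subset ?_
    rintro n ⟨hg, hEhn⟩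
    rcases hPs1sub hg with hE | hP
    exacts [Or.inl ⟨hE, hEhn⟩, Or.inr ⟨hP, hEhn⟩]
  -- partners and obstacles for the h-side solver
  set ok2 : ℕ → Prop := fun i => Nat.casesOn i True ok1 with hok2
  set A2 : ℕ → Set ℕ := fun i => Nat.casesOn i Eg
    (fun m => if h : ok1 m then (D h.choose.1).Eg else ∅) with hA2
  set u2 : ℕ → ℕ → ℝ := fun i => Nat.casesOn i gN
    (fun m => if h : ok1 m then (D h.choose.1).g else 0) with hu2
  set c2 : ℕ → ℝ := fun i => Nat.casesOn i (f (x w, x w))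
    (fun m => if h : ok1 m then f (x h.choose.1, x w) else 0) with hc2
  set F2 : ℕ → Set ℕ := fun m => if h : ok1 m then support (D h.choose.1).h else ∅ with hF2
  have hok20 : ok2 0 := trivial
  have hok2succ : ∀ m, ok1 m → ok2 (m + 1) := fun m h => h
  have hA2at : ∀ v : Set.Iio w, A2 (fI v + 1) = (D v.1).Eg := by
    intro v
    have hex : ok1 (fI v) := ⟨v, rfl⟩
    show (if h : ok1 (fI v) then (D h.choose.1).Eg else ∅) = _
    rw [dif_pos hex, hch v hex]
  have hu2at : ∀ v : Set.Iio w, u2 (fI v + 1) = (D v.1).g := by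
    intro v
    have hex : ok1 (fI v) := ⟨v, rfl⟩
    show (if h : ok1 (fI v) then (D h.choose.1).g else 0) = _
    rw [dif_pos hex, hch v hex]
  have hc2at : ∀ v : Set.Iio w, c2 (fI v + 1) = f (x v.1, x w) := by
    intro v
    have hex : ok1 (fI v) := ⟨v, rfl⟩
    show (if h : ok1 (fI v) then f (x h.choose.1, x w) else 0) = _
    rw [dif_pos hex, hch v hex]
  have hF2at : ∀ v : Set.Iio w, F2 (fI v) = support (D v.1).h := by
    intro v
    have hex : ok1 (fI v) := ⟨v, rfl⟩
    simp only [hF2]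
    rw [dif_pos hex, hch v hex]
  have hA20 : A2 0 = Eg := rfl
  have hu20 : u2 0 = gN := rfl
  have hc20 : c2 0 = f (x w, x w) := rfl
  have hA2empty : ∀ m, ¬ ok1 m → A2 (m + 1) = ∅ := by
    intro m hm
    show (if h : ok1 m then (D h.choose.1).Eg else ∅) = ∅
    rw [dif_neg hm]
  have hu2zero : ∀ m, ¬ ok1 m → u2 (m + 1) = 0 := by
    intro m hm
    show (if h : ok1 m then (D h.choose.1).g else 0) = 0
    rw [dif_neg hm]
  have hF2empty : ∀ m, ¬ ok1 m → F2 m = ∅ := by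
    intro m hm
    simp only [hF2]
    rw [dif_neg hm]
  have hch1 : ∀ k, ok2 k → ∀ n ∈ A2 k, u2 k n ≠ 0 := by
    intro k hk
    cases k with
    | zero =>
      rw [hA20, hu20]
      intro n hn
      rw [hgN1 n hn]; exact one_ne_zero
    | succ m =>
      obtain ⟨v, rfl⟩ := hk
      rw [hA2at v, hu2at v]
      intro n hn
      rw [(hprev v.1 v.2).hg1 n hn]; exact one_ne_zero
  have hch2 : ∀ k, ok2 k → (A2 k).Infinite := by
    intro k hk
    cases k with
    | zero => rw [hA20]; exact hEg1
    | succ m =>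
      obtain ⟨v, rfl⟩ := hk
      rw [hA2at v]
      exact (hprev v.1 v.2).hEgInf
  have hch3 : ∀ k k', k ≠ k' → (A2 k ∩ (A2 k' ∪ support (u2 k'))).Finite := by
    intro k k' hne
    rcases Nat.eq_zero_or_eq_succ_pred k with hk0 | hksucc
    · subst hk0
      rw [hA20]
      obtain ⟨m', rfl⟩ : ∃ m', k' = m' + 1 := ⟨k' - 1, by omega⟩
      by_cases h' : ok1 m'
      · obtain ⟨v, rfl⟩ := h'
        rw [hA2at v, hu2at v]
        refine (hEgFP v).subset ?_
        rintro n ⟨h1, h2⟩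
        refine ⟨h1, ?_⟩
        rcases h2 with h2 | h2
        exacts [Or.inl (hEgsub v h2), Or.inl h2]
      · rw [hA2empty m' h', hu2zero m' h', hsupp0]
        simp only [union_empty, inter_empty]
        exact finite_empty
    · obtain ⟨m, rfl⟩ : ∃ m, k = m + 1 := ⟨k - 1, by omega⟩
      by_cases h : ok1 m
      · obtain ⟨v, rfl⟩ := h
        rw [hA2at v]
        rcases Nat.eq_zero_or_eq_succ_pred k' with hk0' | hksucc'
        · subst hk0'
          rw [hA20, hu20]
          have h1 : ((D v.1).Eg ∩ Eg).Finite := by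
            refine (hEgFP v).subset ?_
            rintro n ⟨ha, hb⟩
            exact ⟨hb, Or.inl (hEgsub v ha)⟩
          have h2 : ((D v.1).Eg ∩ support gN).Finite := by
            refine (hgNFP v).subset ?_
            rintro n ⟨ha, hb⟩
            exact ⟨hb, Or.inl (hEgsub v ha)⟩
          refine (h1.union h2).subset ?_
          rintro n ⟨ha, hb⟩
          rcases hb with hb | hb
          exacts [Or.inl ⟨ha, hb⟩, Or.inr ⟨ha, hb⟩]
        · obtain ⟨m', rfl⟩ : ∃ m', k' = m' + 1 := ⟨k' - 1, by omega⟩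
          by_cases h' : ok1 m'
          · obtain ⟨v', rfl⟩ := h'
            have hvne : v.1 ≠ v'.1 := by
              intro he
              exact hne (by rw [Subtype.ext he])
            rw [hA2at v', hu2at v']
            refine (hFPne v.1 v'.1 v.2 v'.2 hvne).subset ?_
            rintro n ⟨h1, h2⟩
            refine ⟨Or.inl (hEgsub v h1), ?_⟩
            rcases h2 with h2 | h2
            exacts [Or.inl (hEgsub v' h2), Or.inl h2]
          · rw [hA2empty m' h', hu2zero m' h', hsupp0]
            simp only [union_empty, inter_empty]
            exact finite_empty
      · rw [hA2empty m h]
        simp only [empty_inter]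
        exact finite_empty
  have hch4 : ∀ k m, (A2 k ∩ F2 m).Finite := by
    intro k m
    by_cases hm : ok1 m
    · obtain ⟨v', rfl⟩ := hm
      rw [hF2at v']
      cases k with
      | zero =>
        rw [hA20]
        refine (hEgFP v').subset ?_
        rintro n ⟨h1, h2⟩
        exact ⟨h1, Or.inr h2⟩
      | succ m'' =>
        by_cases h : ok1 m''
        · obtain ⟨v, rfl⟩ := h
          rw [hA2at v]
          by_cases hvv : v = v'
          · subst hvv
            refine ((hprev v.1 v.2).hgh.subset ?_)
            rintro n ⟨h1, h2⟩
            exact ⟨hEgsub v h1, h2⟩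
          · have hvne : v.1 ≠ v'.1 := fun he => hvv (Subtype.ext he)
            refine (hFPne v.1 v'.1 v.2 v'.2 hvne).subset ?_
            rintro n ⟨h1, h2⟩
            exact ⟨Or.inl (hEgsub v h1), Or.inr h2⟩
        · rw [hA2empty m'' h]
          simp only [empty_inter]
          exact finite_empty
    · rw [hF2empty m hm]
      simp only [inter_empty]
      exact finite_empty
  have hch5 : ∀ k, (A2 k ∩ Eh).Finite := by
    intro k
    cases k with
    | zero =>
      rw [hA20]
      rw [inter_comm]
      exact hEgEh
    | succ m =>
      by_cases h : ok1 m
      · obtain ⟨v, rfl⟩ := h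
        rw [hA2at v]
        refine (hEhFP v).subset ?_
        rintro n ⟨h1, h2⟩
        exact ⟨h2, Or.inl (hEgsub v h1)⟩
      · rw [hA2empty m h]
        simp only [empty_inter]
        exact finite_empty
  have hch6 : ∀ k, (Eh ∩ support (u2 k)).Finite := by
    intro k
    cases k with
    | zero =>
      rw [hu20]
      rw [inter_comm]
      exact hgNEh
    | succ m =>
      by_cases h : ok1 m
      · obtain ⟨v, rfl⟩ := h
        rw [hu2at v]
        refine (hEhFP v).subset ?_
        rintro n ⟨h1, h2⟩
        exact ⟨h1, Or.inl h2⟩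
      · rw [hu2zero m h, hsupp0]
        simp only [inter_empty]
        exact finite_empty
  have hch7 : ∀ N, (((⋃ m < N, F2 m) ∪ (⋃ k < N, (A2 k ∪ support (u2 k))) ∪ Eh)ᶜ :
      Set ℕ).Infinite := by
    intro N
    refine (hgNV (N+1)).mono (compl_subset_compl.mpr ?_)
    intro n hn
    rcases hn with (hn | hn) | hn
    · simp only [mem_iUnion, exists_prop] at hn
      obtain ⟨m, hmN, hmem⟩ := hn
      by_cases hm : ok1 m
      · obtain ⟨v, rfl⟩ := hm
        rw [hF2at v] at hmem
        refine Or.inl (Or.inl (Or.inr (mem_iUnion₂.mpr ⟨fI v, by omega, ?_⟩)))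
        rw [hA1at, hu1at]
        exact Or.inr hmem
      · rw [hF2empty m hm] at hmem
        exact absurd hmem (notMem_empty n)
    · simp only [mem_iUnion, exists_prop] at hn
      obtain ⟨k, hkN, hmem⟩ := hn
      cases k with
      | zero =>
        rw [hA20, hu20] at hmem
        rcases hmem with hmem | hmem
        · exact Or.inl (Or.inr hmem)
        · exact Or.inr hmem
      | succ m =>
        by_cases hm : ok1 m
        · obtain ⟨v, rfl⟩ := hm
          rw [hA2at v, hu2at v] at hmem
          refine Or.inl (Or.inl (Or.inl (mem_iUnion₂.mpr ⟨fI v + 1, by omega, ?_⟩)))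
          rw [hF1at]
          rcases hmem with hmem | hmem
          exacts [hEgsub v hmem, hmem]
        · rw [hA2empty m hm, hu2zero m hm, hsupp0] at hmem
          simp only [union_empty] at hmem
          exact absurd hmem (notMem_empty n)
    · refine Or.inl (Or.inl (Or.inl (mem_iUnion₂.mpr ⟨0, by omega, hn⟩)))
  obtain ⟨hN, hhN1, hhN2, ⟨Ps2, hPs2sub, hPs2E, hPs2F, hPs2pF⟩, hhNV⟩ :=
    core_lemma A2 u2 c2 ok2 F2 Eh hch1 hch2 hch3 hch4 hch5 hch6 hch7
  -- assemble the stage data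
  refine ⟨⟨gN, hN, Eg, Eh⟩, hEg1, hEh1, hgN1, hhN1, ?_, ?_, ?_, ?_, ?_, ?_, ?_⟩
  · -- hgh
    have h2 : (support gN ∩ Ps2).Finite := by
      have := hPs2pF 0
      rw [hA20, hu20] at this
      refine this.subset ?_
      rintro n ⟨ha, hb⟩
      exact ⟨hb, Or.inr ha⟩
    refine (hgNEh.union h2).subset ?_
    rintro n ⟨ha, hb⟩
    rcases hPs2sub hb with hE | hP
    exacts [Or.inl ⟨ha, hE⟩, Or.inr ⟨ha, hP⟩]
  · -- hADg
    intro v hv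
    exact hgNFP ⟨v, hv⟩
  · -- hADh
    intro v hv
    set vv : Set.Iio w := ⟨v, hv⟩
    have h1 : (Eh ∩ FP D v).Finite := hEhFP vv
    have h2 : (Ps2 ∩ support (D v).h).Finite := by
      have := hPs2F (fI vv)
      rwa [hF2at vv] at this
    have h3 : (Ps2 ∩ support (D v).g).Finite := by
      have := hPs2pF (fI vv + 1)
      rw [hA2at vv, hu2at vv] at this
      refine this.subset ?_
      rintro n ⟨ha, hb⟩
      exact ⟨ha, Or.inr hb⟩
    refine ((h1.union h3).union h2).subset ?_
    rintro n ⟨ha, hb⟩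
    rcases hPs2sub ha with hE | hP
    · exact Or.inl (Or.inl ⟨hE, hb⟩)
    · rcases hb with hb | hb
      · exact Or.inl (Or.inr ⟨hP, hb⟩)
      · exact Or.inr ⟨hP, hb⟩
  · -- hV
    intro S hS hSw
    have hMfin : (fI '' (Subtype.val ⁻¹' S : Set (Set.Iio w))).Finite :=
      ((hS.preimage (Subtype.val_injective.injOn)).image fI)
    obtain ⟨B, hB⟩ := hMfin.bddAbove
    refine (hhNV (B+2)).mono (compl_subset_compl.mpr ?_)
    intro n hn
    rcases hn with hn | (hn | hn)
    · simp only [mem_iUnion, exists_prop] at hn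
      obtain ⟨v, hvS, hmem⟩ := hn
      set vv : Set.Iio w := ⟨v, hSw v hvS⟩
      have hBv : fI vv ≤ B := hB ⟨vv, hvS, rfl⟩
      rcases hmem with hmem | hmem
      · -- support g_v : in pF2 (fI vv + 1)
        refine Or.inl (Or.inl (Or.inr (mem_iUnion₂.mpr ⟨fI vv + 1, by omega, ?_⟩)))
        rw [hu2at vv]
        exact Or.inr hmem
      · -- support h_v : in F2 (fI vv)
        refine Or.inl (Or.inl (Or.inl (mem_iUnion₂.mpr ⟨fI vv, by omega, ?_⟩)))
        rw [hF2at vv]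
        exact hmem
    · -- support gN ⊆ pF2 0
      refine Or.inl (Or.inl (Or.inr (mem_iUnion₂.mpr ⟨0, by omega, ?_⟩)))
      rw [hu20]
      exact Or.inr hn
    · -- support hN
      exact Or.inr hn
  · -- hEQ1
    intro v hv
    set vv : Set.Iio w := ⟨v, hv⟩
    have := hgN2 (fI vv) ⟨vv, rfl⟩
    rwa [hu1at vv, hc1at vv] at this
  · -- hEQ2
    intro v hv
    set vv : Set.Iio w := ⟨v, hv⟩
    have := hhN2 (fI vv + 1) (hok2succ (fI vv) ⟨vv, rfl⟩)
    rw [hu2at vv, hc2at vv] at this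
    exact this.comm
  · -- hEQ0
    have := hhN2 0 hok20
    rw [hu20, hc20] at this
    exact this.comm


theorem Good_congr {D1 D2 : W → SD} {w : W} {d : SD} (h : ∀ v, v < w → D1 v = D2 v)
    (hG : Good f x D1 w d) : Good f x D2 w d := by
  have hFP : ∀ v, v < w → FP D2 v = FP D1 v := fun v hv => by rw [FP, FP, h v hv]
  refine ⟨hG.hEgInf, hG.hEhInf, hG.hg1, hG.hh1, hG.hgh, ?_, ?_, ?_, ?_, ?_, hG.hEQ0⟩
  · intro v hv; rw [hFP v hv]; exact hG.hADg v hv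
  · intro v hv; rw [hFP v hv]; exact hG.hADh v hv
  · intro S hS hSw
    have : (⋃ v ∈ S, FP D2 v) = ⋃ v ∈ S, FP D1 v :=
      Set.iUnion₂_congr (fun v hv => hFP v (hSw v hv))
    rw [this]; exact hG.hV S hS hSw
  · intro v hv; rw [← h v hv]; exact hG.hEQ1 v hv
  · intro v hv; rw [← h v hv]; exact hG.hEQ2 v hv

open Classical in
def DD : W → SD :=
  (IsWellFounded.wf (α := W) (r := (· < ·))).fix fun w ih =>
    if h : ∃ d, Good f x (fun v => if hv : v < w then ih v hv else default) w d then
      h.choose else default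

open Classical in
theorem DD_good : ∀ w, Good f x (DD f x) w (DD f x w) := by
  intro w
  induction w using (IsWellFounded.wf (α := W) (r := (· < ·))).induction with
  | _ w IH =>
    have hfix : DD f x w =
        (if h : ∃ d, Good f x (fun v => if hv : v < w then DD f x v else default) w d then
          h.choose else default) := WellFounded.fix_eq _ _ w
    set Dtr : W → SD := fun v => if hv : v < w then DD f x v else default with hDtr
    have hDtrEq : ∀ v, v < w → Dtr v = DD f x v := fun v hv => by
      rw [hDtr]; simp only; rw [dif_pos hv]
    have hbelow : ∀ v, v < w → Good f x Dtr v (Dtr v) := by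
      intro v hv
      rw [hDtrEq v hv]
      exact Good_congr f x (fun u hu => (hDtrEq u (hu.trans hv)).symm) (IH v hv)
    obtain ⟨d, hd⟩ := stage f x w Dtr hbelow
    have hex : ∃ d, Good f x Dtr w d := ⟨d, hd⟩
    have : DD f x w = hex.choose := by rw [hfix, dif_pos hex]
    rw [this]
    exact Good_congr f x hDtrEq hex.choose_spec


end

end DaviesCH

/-- Davies' theorem: CH implies that every `f : ℝ × ℝ → ℝ` can be written as a
pointwise convergent series `f (x, y) = Σₙ g⁰ₙ x * g¹ₙ y`. -/
theorem davies_of_CH (hCH : Cardinal.continuum = Cardinal.aleph 1) :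
    ∀ f : ℝ × ℝ → ℝ, ∃ g0 g1 : ℕ → ℝ → ℝ, ∀ x y : ℝ,
      Filter.Tendsto (fun N => ∑ n ∈ Finset.range N, g0 n x * g1 n y)
        Filter.atTop (nhds (f (x, y))) := by
  intro f
  have hCH0 : (Cardinal.continuum : Cardinal.{0}) = Cardinal.aleph 1 := by
    apply Cardinal.lift_injective
    rw [Cardinal.lift_continuum, Cardinal.lift_aleph, Ordinal.lift_one]
    exact hCH
  have hmk : Cardinal.mk ℝ = Cardinal.mk DaviesCH.W := by
    rw [Cardinal.mk_real, Cardinal.mk_ord_toType]; exact hCH0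
  obtain ⟨φ⟩ := Cardinal.eq.mp hmk
  set x : DaviesCH.W → ℝ := fun w => φ.symm w with hx
  set D := DaviesCH.DD f x with hD
  have hgood := DaviesCH.DD_good f x
  refine ⟨fun n r => (D (φ r)).g n, fun n r => (D (φ r)).h n, ?_⟩
  intro a b
  have hxa : x (φ a) = a := φ.symm_apply_apply a
  have hxb : x (φ b) = b := φ.symm_apply_apply b
  rcases lt_trichotomy (φ a) (φ b) with h | h | h
  · have := (hgood (φ b)).hEQ2 (φ a) h
    rw [hxa, hxb] at this
    exact this.tendsto
  · have hab : a = b := φ.injective h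
    subst hab
    have := (hgood (φ a)).hEQ0
    rw [hxa] at this
    exact this.tendsto
  · have := (hgood (φ a)).hEQ1 (φ b) h
    rw [hxa, hxb] at this
    exact this.tendsto
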